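/- arXiv:1006.2955 — 2 statements merged into one kernel-verified Lean document; each statement's English description precedes it below -/
import Mathlib

section
/- If G has a vertex cover of size τ, then the edges of the augmented grid embedding (where each edge of G is replaced by a path of 5 edges) can be covered by τ + 2|E| sensors, by placing sensors at the cover vertices and at alternate internal vertices of each 5-path. -/
/-- Vertices of the 5-subdivision of a graph on `V`: original vertices, plus 4 internal
vertices for each (oriented `a < b`) edge. -/
abbrev SubVert (V : Type*) := V ⊕ (V × V × Fin 4)

/-- One-directional adjacency of the 5-subdivision: for each edge `a —G— b` with `a < b`,
the path `a – (a,b,0) – (a,b,1) – (a,b,2) – (a,b,3) – b`. -/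
def subdivRel {V : Type*} [LinearOrder V] (G : SimpleGraph V) :
    SubVert V → SubVert V → Prop
  | Sum.inl u, Sum.inr (a, b, i) =>
      G.Adj a b ∧ a < b ∧ ((u = a ∧ i = 0) ∨ (u = b ∧ i = 3))
  | Sum.inr (a, b, i), Sum.inr (a', b', j) =>
      a = a' ∧ b = b' ∧ G.Adj a b ∧ a < b ∧ (i : ℕ) + 1 = (j : ℕ)
  | _, _ => False

/-- The 5-subdivision of `G`: every edge is replaced by a path of 5 edges. -/
def subdiv {V : Type*} [LinearOrder V] (G : SimpleGraph V) : SimpleGraph (SubVert V) where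
  Adj x y := subdivRel G x y ∨ subdivRel G y x
  symm := ⟨fun _ _ h => h.symm⟩
  loopless := ⟨by
    rintro (u | ⟨a, b, i⟩) h
    · rcases h with h | h <;> exact h.elim
    · rcases h with ⟨-, -, -, -, h⟩ | ⟨-, -, -, -, h⟩ <;> omega⟩

/-- `S` is a vertex cover of `H`. -/
def IsCover {W : Type*} (H : SimpleGraph W) (S : Set W) : Prop :=
  ∀ ⦃u v : W⦄, H.Adj u v → u ∈ S ∨ v ∈ S

/-- If `G` has a vertex cover of size `τ`, then the edges of its 5-subdivision can be
covered by `τ + 2|E|` vertices. -/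
theorem subdiv_cover_of_cover {V : Type*} [Fintype V] [LinearOrder V]
    (G : SimpleGraph V) [DecidableRel G.Adj] (C : Finset V) (τ : ℕ)
    (hC : IsCover G (C : Set V)) (hτ : C.card = τ) :
    ∃ S : Finset (SubVert V), IsCover (subdiv G) (S : Set (SubVert V)) ∧
      S.card ≤ τ + 2 * G.edgeFinset.card := by
  classical
  set P : Finset (V × V) := Finset.univ.filter (fun p => G.Adj p.1 p.2 ∧ p.1 < p.2) with hP
  set f : V × V → Finset (SubVert V) := fun p =>
    if p.1 ∈ C then {Sum.inr (p.1, p.2, (1 : Fin 4)), Sum.inr (p.1, p.2, (3 : Fin 4))}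
    else {Sum.inr (p.1, p.2, (0 : Fin 4)), Sum.inr (p.1, p.2, (2 : Fin 4))} with hf
  refine ⟨C.image Sum.inl ∪ P.biUnion f, ?_, ?_⟩
  · -- cover
    have key : ∀ x y : SubVert V, subdivRel G x y →
        x ∈ (C.image Sum.inl ∪ P.biUnion f : Finset (SubVert V)) ∨
        y ∈ (C.image Sum.inl ∪ P.biUnion f : Finset (SubVert V)) := by
      rintro (u | ⟨a, b, i⟩) (w | ⟨a', b', j⟩) h <;> try exact h.elim
      · -- inl u, inr (a',b',j)
        obtain ⟨hadj, hlt, hcase⟩ := h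
        have hPmem : (a', b') ∈ P := by simp [hP, hadj, hlt]
        rcases hcase with ⟨rfl, rfl⟩ | ⟨rfl, rfl⟩
        · by_cases hu : u ∈ C
          · left; exact Finset.mem_union_left _ (Finset.mem_image_of_mem _ hu)
          · right; refine Finset.mem_union_right _ (Finset.mem_biUnion.2 ⟨_, hPmem, ?_⟩)
            simp [hf, hu]
        · rcases hC hadj with ha | hb
          · right; refine Finset.mem_union_right _ (Finset.mem_biUnion.2 ⟨_, hPmem, ?_⟩)
            simp only [Finset.mem_coe] at ha
            simp [hf, ha]
          · left
            exact Finset.mem_union_left _ (Finset.mem_image_of_mem _ (Finset.mem_coe.1 hb))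
      · -- inr inr
        obtain ⟨rfl, rfl, hadj, hlt, hij⟩ := h
        have hPmem : (a, b) ∈ P := by simp [hP, hadj, hlt]
        have mem_f : ∀ k : Fin 4, Sum.inr (a, b, k) ∈ f (a, b) →
            Sum.inr (a, b, k) ∈ (C.image Sum.inl ∪ P.biUnion f : Finset (SubVert V)) :=
          fun k hk => Finset.mem_union_right _ (Finset.mem_biUnion.2 ⟨_, hPmem, hk⟩)
        have hival : (i : ℕ) = 0 ∨ (i : ℕ) = 1 ∨ (i : ℕ) = 2 := by omega
        by_cases ha : a ∈ C
        · rcases hival with h0 | h1 | h2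
          · right; apply mem_f; have : j = 1 := Fin.ext (by omega); subst this; simp [hf, ha]
          · left; apply mem_f; have : i = 1 := Fin.ext (by omega); subst this; simp [hf, ha]
          · right; apply mem_f; have : j = 3 := Fin.ext (by omega); subst this; simp [hf, ha]
        · rcases hival with h0 | h1 | h2
          · left; apply mem_f; have : i = 0 := Fin.ext (by omega); subst this; simp [hf, ha]
          · right; apply mem_f; have : j = 2 := Fin.ext (by omega); subst this; simp [hf, ha]
          · left; apply mem_f; have : i = 2 := Fin.ext (by omega); subst this; simp [hf, ha]
    intro u v huv
    rcases huv with h | h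
    · exact (key u v h).imp (by simpa using ·) (by simpa using ·)
    · exact ((key v u h).symm).imp (by simpa using ·) (by simpa using ·)
  · -- cardinality
    have hPcard : P.card = G.edgeFinset.card := by
      apply Finset.card_bij (fun p _ => Sym2.mk p.1 p.2)
      · intro p hp
        simp only [hP, Finset.mem_filter] at hp
        simpa [SimpleGraph.mem_edgeFinset] using hp.2.1
      · rintro ⟨a, b⟩ ha ⟨c, d⟩ hc h
        simp only [hP, Finset.mem_filter] at ha hc
        rcases Sym2.eq_iff.1 h with ⟨rfl, rfl⟩ | ⟨rfl, rfl⟩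
        · rfl
        · exact absurd hc.2.2 (not_lt.2 ha.2.2.le)
      · intro e he
        induction e with
        | _ x y =>
          rw [SimpleGraph.mem_edgeFinset] at he
          have hadj : G.Adj x y := he
          rcases lt_or_gt_of_ne hadj.ne with h | h
          · exact ⟨(x, y), by simp [hP, hadj, h], rfl⟩
          · exact ⟨(y, x), by simp [hP, hadj.symm, h], Sym2.eq_swap⟩
    calc (C.image Sum.inl ∪ P.biUnion f).card
        ≤ (C.image Sum.inl).card + (P.biUnion f).card := Finset.card_union_le _ _
      _ ≤ τ + 2 * G.edgeFinset.card := by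
          gcongr
          · exact hτ ▸ Finset.card_image_le
          · calc (P.biUnion f).card ≤ ∑ p ∈ P, (f p).card := Finset.card_biUnion_le
              _ ≤ ∑ p ∈ P, 2 := by
                  apply Finset.sum_le_sum
                  intro p _
                  by_cases h : p.1 ∈ C <;> simp [hf, h]
              _ = 2 * G.edgeFinset.card := by simp [hPcard, mul_comm]
end

section
/- Any set of hippodromes of horizontal segments lying in a horizontal strip of height √3·ρ, all of which intersect the hippodrome of the segment with leftmost right-endpoint, can be simultaneously pierced by 2 points (the two disk centers covering the 2ρ × √3ρ rectangle anchored at that right endpoint). -/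
open Metric Set

lemma seg_compact (x y : EuclideanSpace ℝ (Fin 2)) : IsCompact (segment ℝ x y) := by
  rw [segment_eq_image']
  exact isCompact_Icc.image (by continuity)

lemma coord_apply (x y : EuclideanSpace ℝ (Fin 2)) (s t : ℝ) (i : Fin 2) :
    (s • x + t • y) i = s * x i + t * y i := by
  simp [PiLp.add_apply, PiLp.smul_apply, smul_eq_mul]

lemma coord_le (x y : EuclideanSpace ℝ (Fin 2)) (i : Fin 2) : |x i - y i| ≤ dist x y := by
  rw [EuclideanSpace.dist_eq, ← Real.sqrt_sq_eq_abs (x i - y i)]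
  apply Real.sqrt_le_sqrt
  have : dist (x i) (y i) ^ 2 = (x i - y i)^2 := by rw [Real.dist_eq, sq_abs]
  rw [← this]
  exact Finset.single_le_sum (f := fun j => dist (x j) (y j)^2)
    (fun j _ => sq_nonneg _) (Finset.mem_univ i)

lemma dist_le_of (x c : EuclideanSpace ℝ (Fin 2)) (ρ : ℝ) (hρ : 0 ≤ ρ)
    (h0 : (x 0 - c 0)^2 ≤ ρ^2/4) (h1 : (x 1 - c 1)^2 ≤ 3*ρ^2/4) : dist x c ≤ ρ := by
  rw [EuclideanSpace.dist_eq, Fin.sum_univ_two]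
  rw [show ρ = Real.sqrt (ρ^2) from (Real.sqrt_sq hρ).symm]
  apply Real.sqrt_le_sqrt
  rw [Real.dist_eq, Real.dist_eq, sq_abs, sq_abs]
  linarith

/-- Coordinates of a point on a horizontal segment. -/
lemma seg_coords (x y w : EuclideanSpace ℝ (Fin 2)) (hw : w ∈ segment ℝ x y)
    (hh : x 1 = y 1) (hxy : x 0 ≤ y 0) :
    w 1 = y 1 ∧ x 0 ≤ w 0 ∧ w 0 ≤ y 0 := by
  obtain ⟨s, t, hs, ht, hst, rfl⟩ := hw
  rw [coord_apply, coord_apply, hh]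
  refine ⟨by rw [show s * y 1 + t * y 1 = (s+t) * y 1 by ring, hst, one_mul], ?_, ?_⟩
  · have h1 : s * x 0 + t * x 0 = x 0 := by rw [← add_mul, hst, one_mul]
    linarith [mul_nonneg ht (sub_nonneg.mpr hxy)]
  · have h1 : s * y 0 + t * y 0 = y 0 := by rw [← add_mul, hst, one_mul]
    linarith [mul_nonneg hs (sub_nonneg.mpr hxy)]

/-- A horizontal segment with a point left of `B` and right endpoint right of `A`
contains a point with first coordinate in `[A, B]`. -/
lemma exists_pt (x y a : EuclideanSpace ℝ (Fin 2)) (ha : a ∈ segment ℝ x y)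
    (hh : x 1 = y 1) (hxy : x 0 ≤ y 0) (A B : ℝ) (hAB : A ≤ B)
    (haB : a 0 ≤ B) (hAy : A ≤ y 0) :
    ∃ c ∈ segment ℝ x y, c 1 = y 1 ∧ A ≤ c 0 ∧ c 0 ≤ B := by
  obtain ⟨ha1, hax, hay⟩ := seg_coords x y a ha hh hxy
  by_cases hA : A ≤ a 0
  · exact ⟨a, ha, ha1, hA, haB⟩
  · push_neg at hA
    have hd : 0 < y 0 - a 0 := by linarith
    set s : ℝ := (A - a 0) / (y 0 - a 0) with hsdef
    have hs0 : 0 ≤ s := div_nonneg (by linarith) hd.le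
    have hs1 : s ≤ 1 := by
      rw [hsdef, div_le_one hd]; linarith
    refine ⟨(1-s) • a + s • y, ?_, ?_, ?_, ?_⟩
    · exact (convex_segment x y).segment_subset ha (right_mem_segment ℝ x y)
        ⟨1-s, s, by linarith, hs0, by ring, rfl⟩
    · rw [coord_apply, ha1]; ring
    · rw [coord_apply]
      have : s * (y 0 - a 0) = A - a 0 := div_mul_cancel₀ _ hd.ne'
      nlinarith
    · rw [coord_apply]
      have : s * (y 0 - a 0) = A - a 0 := div_mul_cancel₀ _ hd.ne'
      nlinarith

/-- Horizontal segments in a strip of height `√3·ρ`, whose `ρ`-hippodromes all meet the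
hippodrome of the segment `ℓ₁ = [u₀, v₀]` with leftmost right endpoint, can all be
pierced (covered) using just two sensor positions `p, q`. -/
theorem two_points_pierce_strip (ρ : ℝ) (hρ : 0 < ρ) (r : ℕ)
    (u₀ v₀ : EuclideanSpace ℝ (Fin 2)) (u v : Fin r → EuclideanSpace ℝ (Fin 2))
    -- all segments are horizontal:
    (hhor₀ : u₀ 1 = v₀ 1) (hhor : ∀ i, (u i) 1 = (v i) 1)
    -- all segments lie inside the strip ℝ × [0, √3·ρ]:
    (hstrip₀ : v₀ 1 ∈ Icc (0 : ℝ) (Real.sqrt 3 * ρ))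
    (hstrip : ∀ i, (v i) 1 ∈ Icc (0 : ℝ) (Real.sqrt 3 * ρ))
    -- `v₀` and `v i` are the right endpoints:
    (hright₀ : u₀ 0 ≤ v₀ 0) (hright : ∀ i, (u i) 0 ≤ (v i) 0)
    -- `ℓ₁` has the leftmost right endpoint:
    (hmin : ∀ i, v₀ 0 ≤ (v i) 0)
    -- every hippodrome intersects the hippodrome of `ℓ₁`:
    (hmeet : ∀ i, ∃ z : EuclideanSpace ℝ (Fin 2),
        infDist z (segment ℝ (u i) (v i)) ≤ ρ ∧ infDist z (segment ℝ u₀ v₀) ≤ ρ) :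
    ∃ p q : EuclideanSpace ℝ (Fin 2),
      (infDist p (segment ℝ u₀ v₀) ≤ ρ ∨ infDist q (segment ℝ u₀ v₀) ≤ ρ) ∧
      ∀ i, infDist p (segment ℝ (u i) (v i)) ≤ ρ ∨
           infDist q (segment ℝ (u i) (v i)) ≤ ρ := by
  have h3 : Real.sqrt 3 ^ 2 = 3 := Real.sq_sqrt (by norm_num)
  set p : EuclideanSpace ℝ (Fin 2) :=
    WithLp.toLp 2 (fun j : Fin 2 => if j = 0 then v₀ 0 + ρ/2 else Real.sqrt 3 * ρ/2) with hpdef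
  set q : EuclideanSpace ℝ (Fin 2) :=
    WithLp.toLp 2 (fun j : Fin 2 => if j = 0 then v₀ 0 + 3*ρ/2 else Real.sqrt 3 * ρ/2) with hqdef
  have hp0 : p 0 = v₀ 0 + ρ/2 := by rw [hpdef]; simp
  have hp1 : p 1 = Real.sqrt 3 * ρ/2 := by rw [hpdef]; simp
  have hq0 : q 0 = v₀ 0 + 3*ρ/2 := by rw [hqdef]; simp
  have hq1 : q 1 = Real.sqrt 3 * ρ/2 := by rw [hqdef]; simp
  have key : ∀ yc : ℝ, 0 ≤ yc → yc ≤ Real.sqrt 3 * ρ →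
      (Real.sqrt 3 * ρ/2 - yc)^2 ≤ 3*ρ^2/4 := by
    intro yc h1 h2
    nlinarith [h3, mul_nonneg h1 (sub_nonneg.mpr h2)]
  refine ⟨p, q, Or.inl ?_, fun i => ?_⟩
  · refine le_trans (infDist_le_dist_of_mem (right_mem_segment ℝ u₀ v₀)) ?_
    refine dist_le_of p v₀ ρ hρ.le ?_ ?_
    · rw [hp0]; nlinarith
    · rw [hp1]; exact key (v₀ 1) hstrip₀.1 hstrip₀.2
  · obtain ⟨z, hz1, hz0⟩ := hmeet i
    obtain ⟨a, ha, hda⟩ := (seg_compact (u i) (v i)).exists_infDist_eq_dist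
      ⟨_, left_mem_segment ℝ (u i) (v i)⟩ z
    obtain ⟨b, hb, hdb⟩ := (seg_compact u₀ v₀).exists_infDist_eq_dist
      ⟨_, left_mem_segment ℝ u₀ v₀⟩ z
    have hab : dist a b ≤ 2*ρ := by
      calc dist a b ≤ dist a z + dist z b := dist_triangle a z b
        _ = dist z a + dist z b := by rw [dist_comm a z]
        _ ≤ ρ + ρ := add_le_add (hda ▸ hz1) (hdb ▸ hz0)
        _ = 2*ρ := by ring
    have hb0 : b 0 ≤ v₀ 0 := (seg_coords u₀ v₀ b hb hhor₀ hright₀).2.2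
    have haB : a 0 ≤ v₀ 0 + 2*ρ := by
      have := (abs_le.mp (le_trans (coord_le a b 0) hab)).2
      linarith
    obtain ⟨c, hc, hc1, hcA, hcB⟩ := exists_pt (u i) (v i) a ha (hhor i) (hright i)
      (v₀ 0) (v₀ 0 + 2*ρ) (by linarith) haB (hmin i)
    have hcy0 : 0 ≤ c 1 := hc1 ▸ (hstrip i).1
    have hcy1 : c 1 ≤ Real.sqrt 3 * ρ := hc1 ▸ (hstrip i).2
    by_cases hcase : c 0 ≤ v₀ 0 + ρ
    · left
      refine le_trans (infDist_le_dist_of_mem hc) ?_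
      refine dist_le_of p c ρ hρ.le ?_ ?_
      · rw [hp0]; nlinarith
      · rw [hp1]; exact key (c 1) hcy0 hcy1
    · right
      push_neg at hcase
      refine le_trans (infDist_le_dist_of_mem hc) ?_
      refine dist_le_of q c ρ hρ.le ?_ ?_
      · rw [hq0]; nlinarith
      · rw [hq1]; exact key (c 1) hcy0 hcy1
end
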